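/- arXiv:2306.12952 — 5 statements merged into one kernel-verified Lean document; each statement's English description precedes it below -/
import Mathlib

section
/- Let ε ∈ (0,1] and λ ≥ 3. For every pair (u,v) with u ∈ C²([0,1]) satisfying u(0)=u'(0)=u(1)=u'(1)=0 and v ∈ C²([0,1]), the bilinear form satisfies the coercivity estimate B((u,v),(u,v)) ≥ ⦀(u,v)⦀², i.e. λ‖v − ε^{3/2}u''‖² + ε⁴‖v''‖² + 16‖u‖² + 4ε^{3/2}(1+ε)∫₀¹ v''(x)u(x) dx ≥ ‖u‖² + ε³‖u''‖² + ‖v‖² + ε⁴‖v''‖². -/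
open MeasureTheory Set Real

noncomputable section

/-- L²(0,1) inner product. -/
def L2ip (f g : ℝ → ℝ) : ℝ := ∫ x in (0:ℝ)..1, f x * g x

/-- Square of the L²(0,1) norm. -/
def L2nsq (f : ℝ → ℝ) : ℝ := ∫ x in (0:ℝ)..1, (f x)^2

/-- k-th derivative within [0,1]. -/
def Dn (k : ℕ) (f : ℝ → ℝ) : ℝ → ℝ := iteratedDerivWithin k f (Icc (0:ℝ) 1)

/-- Square of the balanced norm. -/
def balSq (ε : ℝ) (u v : ℝ → ℝ) : ℝ :=
  L2nsq u + ε^3 * L2nsq (Dn 2 u) + L2nsq v + ε^4 * L2nsq (Dn 2 v)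

/-- Clamped boundary conditions u(0)=u'(0)=u(1)=u'(1)=0. -/
def ClampedBC (u : ℝ → ℝ) : Prop :=
  u 0 = 0 ∧ Dn 1 u 0 = 0 ∧ u 1 = 0 ∧ Dn 1 u 1 = 0

lemma L2nsq_nonneg (f : ℝ → ℝ) : 0 ≤ L2nsq f :=
  intervalIntegral.integral_nonneg zero_le_one (fun x _ => sq_nonneg _)

lemma intInt_of_contOn {f : ℝ → ℝ} (hf : ContinuousOn f (Icc (0:ℝ) 1)) :
    IntervalIntegrable f volume 0 1 := by
  apply ContinuousOn.intervalIntegrable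
  rwa [uIcc_of_le zero_le_one]

lemma expand_sq (f g : ℝ → ℝ) (c : ℝ) (hf : ContinuousOn f (Icc (0:ℝ) 1))
    (hg : ContinuousOn g (Icc (0:ℝ) 1)) :
    L2nsq (fun x => f x - c * g x)
      = L2nsq f - 2*c*(∫ x in (0:ℝ)..1, f x * g x) + c^2 * L2nsq g := by
  unfold L2nsq
  have h1 : IntervalIntegrable (fun x => (f x)^2) volume 0 1 :=
    intInt_of_contOn (hf.pow 2)
  have h2 : IntervalIntegrable (fun x => 2*c*(f x * g x)) volume 0 1 :=
    intInt_of_contOn (((hf.mul hg).const_smul (2*c)).congr (fun x _ => by simp [smul_eq_mul]))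
  have h3 : IntervalIntegrable (fun x => c^2 * (g x)^2) volume 0 1 :=
    intInt_of_contOn (((hg.pow 2).const_smul (c^2)).congr (fun x _ => by simp [smul_eq_mul]))
  have heq : (fun x => (f x - c * g x)^2)
      = fun x => ((f x)^2 - 2*c*(f x * g x)) + c^2 * (g x)^2 := by
    funext x; ring
  rw [heq, intervalIntegral.integral_add (h1.sub h2) h3,
    intervalIntegral.integral_sub h1 h2,
    intervalIntegral.integral_const_mul, intervalIntegral.integral_const_mul]

/-- Coercivity of the bilinear form B with respect to the balanced norm. -/
theorem coercivity (ε lam : ℝ) (hε : ε ∈ Ioc (0:ℝ) 1) (hlam : 3 ≤ lam)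
    (u v : ℝ → ℝ)
    (hu : ContDiffOn ℝ 2 u (Icc (0:ℝ) 1)) (hbc : ClampedBC u)
    (hv : ContDiffOn ℝ 2 v (Icc (0:ℝ) 1)) :
    balSq ε u v ≤
      lam * L2nsq (fun x => v x - ε ^ ((3:ℝ)/2) * Dn 2 u x)
        + ε^4 * L2nsq (Dn 2 v) + 16 * L2nsq u
        + 4 * ε ^ ((3:ℝ)/2) * (1 + ε) * ∫ x in (0:ℝ)..1, Dn 2 v x * u x := by
  obtain ⟨hε0, hε1⟩ := hε
  obtain ⟨hu0, hu'0, hu1bc, hu'1⟩ := hbc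
  have hud : UniqueDiffOn ℝ (Icc (0:ℝ) 1) := uniqueDiffOn_Icc one_pos
  have hIcc : Set.uIcc (0:ℝ) 1 = Icc (0:ℝ) 1 := uIcc_of_le zero_le_one
  -- continuity facts
  have hcu : ContinuousOn u (Icc (0:ℝ) 1) := hu.continuousOn
  have hcv : ContinuousOn v (Icc (0:ℝ) 1) := hv.continuousOn
  have hcu2 : ContinuousOn (Dn 2 u) (Icc (0:ℝ) 1) :=
    hu.continuousOn_iteratedDerivWithin (by norm_num) hud
  have hcv2 : ContinuousOn (Dn 2 v) (Icc (0:ℝ) 1) :=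
    hv.continuousOn_iteratedDerivWithin (by norm_num) hud
  have hcu1 : ContinuousOn (Dn 1 u) (Icc (0:ℝ) 1) :=
    hu.continuousOn_iteratedDerivWithin (by norm_num) hud
  have hcv1 : ContinuousOn (Dn 1 v) (Icc (0:ℝ) 1) :=
    hv.continuousOn_iteratedDerivWithin (by norm_num) hud
  -- derivative facts
  have hDf : ∀ (f : ℝ → ℝ), ContDiffOn ℝ 2 f (Icc (0:ℝ) 1) →
      (∀ x ∈ Icc (0:ℝ) 1, HasDerivWithinAt f (Dn 1 f x) (Icc (0:ℝ) 1) x) ∧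
      (∀ x ∈ Icc (0:ℝ) 1, HasDerivWithinAt (Dn 1 f) (Dn 2 f x) (Icc (0:ℝ) 1) x) := by
    intro f hf
    constructor
    · intro x hx
      have h := (hf.differentiableOn (by norm_num)) x hx
      have h2 := h.hasDerivWithinAt
      rwa [Dn, iteratedDerivWithin_one]
    · intro x hx
      have h : DifferentiableOn ℝ (iteratedDerivWithin 1 f (Icc (0:ℝ) 1)) (Icc (0:ℝ) 1) :=
        hf.differentiableOn_iteratedDerivWithin (by norm_num) hud
      have h2 := (h x hx).hasDerivWithinAt
      have e : Dn 2 f x = derivWithin (iteratedDerivWithin 1 f (Icc (0:ℝ) 1)) (Icc (0:ℝ) 1) x := by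
        have := congrFun (iteratedDerivWithin_succ (𝕜 := ℝ) (f := f) (s := Icc (0:ℝ) 1) (n := 1)) x
        simpa [Dn] using this
      rw [Dn, e]
      exact h2
  obtain ⟨hDu, hDu2⟩ := hDf u hu
  obtain ⟨hDv, hDv2⟩ := hDf v hv
  -- integration by parts twice
  have ibp1 : ∫ x in (0:ℝ)..1, u x * Dn 2 v x
      = - ∫ x in (0:ℝ)..1, Dn 1 u x * Dn 1 v x := by
    have h := intervalIntegral.integral_mul_deriv_eq_deriv_mul_of_hasDerivWithinAt
      (fun x hx => (hDu x (hIcc ▸ hx)).mono hIcc.le) (fun x hx => (hDv2 x (hIcc ▸ hx)).mono hIcc.le)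
      (intInt_of_contOn hcu1) (intInt_of_contOn hcv2)
    rw [hu0, hu1bc] at h
    simpa using h
  have ibp2 : ∫ x in (0:ℝ)..1, Dn 1 u x * Dn 1 v x
      = - ∫ x in (0:ℝ)..1, Dn 2 u x * v x := by
    have h := intervalIntegral.integral_mul_deriv_eq_deriv_mul_of_hasDerivWithinAt
      (fun x hx => (hDu2 x (hIcc ▸ hx)).mono hIcc.le) (fun x hx => (hDv x (hIcc ▸ hx)).mono hIcc.le)
      (intInt_of_contOn hcu2) (intInt_of_contOn hcv1)
    rw [hu'0, hu'1] at h
    simpa using h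
  have key : (∫ x in (0:ℝ)..1, Dn 2 v x * u x) = ∫ x in (0:ℝ)..1, v x * Dn 2 u x := by
    have h1 : (∫ x in (0:ℝ)..1, Dn 2 v x * u x) = ∫ x in (0:ℝ)..1, u x * Dn 2 v x := by
      simp_rw [mul_comm]
    have h2 : (∫ x in (0:ℝ)..1, Dn 2 u x * v x) = ∫ x in (0:ℝ)..1, v x * Dn 2 u x := by
      simp_rw [mul_comm]
    rw [h1, ibp1, ibp2, neg_neg, h2]
  -- notation
  set s : ℝ := ε ^ ((3:ℝ)/2) with hs
  have hs0 : 0 < s := Real.rpow_pos_of_pos hε0 _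
  have hs2 : s^2 = ε^3 := by
    rw [hs, ← Real.rpow_natCast (ε ^ ((3:ℝ)/2)) 2, ← Real.rpow_mul hε0.le]
    norm_num
  set J : ℝ := ∫ x in (0:ℝ)..1, v x * Dn 2 u x with hJ
  have hexp1 : L2nsq (fun x => v x - s * Dn 2 u x)
      = L2nsq v - 2*s*J + s^2 * L2nsq (Dn 2 u) := expand_sq v (Dn 2 u) s hcv hcu2
  have hexp2 : L2nsq (fun x => v x - (-s) * Dn 2 u x)
      = L2nsq v - 2*(-s)*J + (-s)^2 * L2nsq (Dn 2 u) := expand_sq v (Dn 2 u) (-s) hcv hcu2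
  have hminus : 0 ≤ L2nsq v - 2*s*J + s^2 * L2nsq (Dn 2 u) := hexp1 ▸ L2nsq_nonneg _
  have hplus : 0 ≤ L2nsq v + 2*s*J + s^2 * L2nsq (Dn 2 u) := by
    have := hexp2 ▸ L2nsq_nonneg (fun x => v x - (-s) * Dn 2 u x)
    nlinarith [this]
  have hA : 0 ≤ L2nsq u := L2nsq_nonneg u
  have hB : 0 ≤ L2nsq (Dn 2 u) := L2nsq_nonneg _
  have hC : 0 ≤ L2nsq v := L2nsq_nonneg v
  -- conclude
  rw [balSq, key, hexp1, ← hs2]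
  set A := L2nsq u
  set B := L2nsq (Dn 2 u)
  set C := L2nsq v
  rcases le_or_gt 0 (2 + 2*ε - lam) with hq | hq
  · nlinarith [mul_nonneg hq hplus, mul_nonneg (mul_nonneg hε0.le hε0.le) hB,
      mul_nonneg hε0.le hC, mul_nonneg (mul_nonneg hε0.le (sq_nonneg s)) hB]
  · nlinarith [mul_nonneg (le_of_lt (neg_pos.2 hq)) hminus,
      mul_nonneg hε0.le hC, mul_nonneg (mul_nonneg hε0.le (sq_nonneg s)) hB]
end
end

section
/- Let λ > 0. There exists a constant C > 0 depending only on λ (in particular independent of ε) such that for every ε ∈ (0,1], every pair (u,v) and every pair (u*,v*) with u,u* ∈ C²([0,1]) satisfying u(0)=u'(0)=u(1)=u'(1)=0 and u*(0)=u*'(0)=u*(1)=u*'(1)=0 and v,v* ∈ C²([0,1]), one has |B((u,v),(u*,v*))| ≤ C ⦀(u,v)⦀ · ⦀(u*,v*)⦀. -/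
set_option maxHeartbeats 1000000

open MeasureTheory Set Real

noncomputable section

/-- The bilinear form B. -/
def Bform (ε lam : ℝ) (u v us vs : ℝ → ℝ) : ℝ :=
  lam * L2ip (fun x => v x - ε ^ ((3:ℝ)/2) * Dn 2 u x)
             (fun x => vs x - ε ^ ((3:ℝ)/2) * Dn 2 us x)
  + L2ip (fun x => ε ^ ((5:ℝ)/2) * Dn 2 v x + 4 * u x)
         (fun x => ε ^ ((3:ℝ)/2) * Dn 2 vs x + 4 * us x)

/-- The balanced norm. -/
def bal (ε : ℝ) (u v : ℝ → ℝ) : ℝ :=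
  Real.sqrt (L2nsq u + ε^3 * L2nsq (Dn 2 u) + L2nsq v + ε^4 * L2nsq (Dn 2 v))

/- ### Auxiliary lemmas -/

lemma uIcc01 : uIcc (0:ℝ) 1 = Icc 0 1 := uIcc_of_le zero_le_one

lemma udiff : UniqueDiffOn ℝ (Icc (0:ℝ) 1) := uniqueDiffOn_Icc one_pos

lemma contOn_Dn {f : ℝ → ℝ} (hf : ContDiffOn ℝ 2 f (Icc 0 1)) {k : ℕ} (hk : (k:ℕ∞) ≤ 2) :
    ContinuousOn (Dn k f) (Icc (0:ℝ) 1) :=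
  hf.continuousOn_iteratedDerivWithin (by exact_mod_cast hk) udiff

lemma II_mul {f g : ℝ → ℝ} (hf : ContinuousOn f (Icc 0 1)) (hg : ContinuousOn g (Icc 0 1)) :
    IntervalIntegrable (fun x => f x * g x) volume 0 1 :=
  ContinuousOn.intervalIntegrable (by rw [uIcc01]; exact hf.mul hg)

/-- Cauchy–Schwarz. -/
lemma cs {f g : ℝ → ℝ} (hf : ContinuousOn f (Icc 0 1)) (hg : ContinuousOn g (Icc 0 1)) :
    |L2ip f g| ≤ Real.sqrt (L2nsq f) * Real.sqrt (L2nsq g) := by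
  have hff : IntervalIntegrable (fun x => f x ^ 2) volume 0 1 := by
    have := II_mul hf hf; simpa [sq] using this
  have hgg : IntervalIntegrable (fun x => g x ^ 2) volume 0 1 := by
    have := II_mul hg hg; simpa [sq] using this
  have hfg := II_mul hf hg
  have key : ∀ t : ℝ, 0 ≤ L2nsq g * (t * t) + (2 * L2ip f g) * t + L2nsq f := by
    intro t
    have e1 : L2nsq g * (t * t) + (2 * L2ip f g) * t + L2nsq f
        = ∫ x in (0:ℝ)..1, (f x + t * g x)^2 := by
      have hpt : ∀ x : ℝ, (f x + t * g x)^2 = f x ^2 + (2*t) * (f x * g x) + (t*t) * g x ^2 := by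
        intro x; ring
      rw [intervalIntegral.integral_congr
            (g := fun x => f x ^2 + (2*t) * (f x * g x) + (t*t) * g x ^2) (fun x _ => hpt x)]
      rw [intervalIntegral.integral_add (hff.add ((hfg.const_mul _))) (hgg.const_mul _),
        intervalIntegral.integral_add hff (hfg.const_mul _),
        intervalIntegral.integral_const_mul, intervalIntegral.integral_const_mul]
      simp only [L2nsq, L2ip]; ring
    rw [e1]
    exact intervalIntegral.integral_nonneg zero_le_one (fun x _ => sq_nonneg _)
  have hd := discrim_le_zero key
  rw [discrim] at hd
  have h2 : (L2ip f g)^2 ≤ L2nsq f * L2nsq g := by nlinarith [hd]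
  calc |L2ip f g| = Real.sqrt ((L2ip f g)^2) := (Real.sqrt_sq_eq_abs _).symm
    _ ≤ Real.sqrt (L2nsq f * L2nsq g) := Real.sqrt_le_sqrt h2
    _ = Real.sqrt (L2nsq f) * Real.sqrt (L2nsq g) := Real.sqrt_mul (L2nsq_nonneg f) _

lemma hasDerivAt_of_mem {f : ℝ → ℝ} (hf : ContDiffOn ℝ 2 f (Icc 0 1)) {x : ℝ}
    (hx : x ∈ Ioo (0:ℝ) 1) : HasDerivAt f (Dn 1 f x) x := by
  have hmem : Icc (0:ℝ) 1 ∈ nhds x := Icc_mem_nhds hx.1 hx.2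
  have hx' : x ∈ Icc (0:ℝ) 1 := Ioo_subset_Icc_self hx
  have hdiff : DifferentiableWithinAt ℝ f (Icc 0 1) x :=
    (hf.differentiableOn (by norm_num)) x hx'
  have h1 : Dn 1 f x = derivWithin f (Icc 0 1) x := congrFun iteratedDerivWithin_one x
  rw [h1]
  exact (hdiff.hasDerivWithinAt).hasDerivAt hmem

lemma hasDerivAt_Dn1 {f : ℝ → ℝ} (hf : ContDiffOn ℝ 2 f (Icc 0 1)) {x : ℝ}
    (hx : x ∈ Ioo (0:ℝ) 1) : HasDerivAt (Dn 1 f) (Dn 2 f x) x := by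
  have hmem : Icc (0:ℝ) 1 ∈ nhds x := Icc_mem_nhds hx.1 hx.2
  have hx' : x ∈ Icc (0:ℝ) 1 := Ioo_subset_Icc_self hx
  have hC1 : ContDiffOn ℝ 1 (derivWithin f (Icc 0 1)) (Icc 0 1) :=
    hf.derivWithin udiff (by norm_num)
  have hdiff : DifferentiableWithinAt ℝ (derivWithin f (Icc 0 1)) (Icc 0 1) x :=
    (hC1.differentiableOn (by norm_num)) x hx'
  have h2 : Dn 2 f x = derivWithin (derivWithin f (Icc 0 1)) (Icc 0 1) x := by
    have hs := iteratedDerivWithin_succ (n := 1) (f := f) (s := Icc (0:ℝ) 1)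
    replace hs := congrFun hs x
    rw [Dn, hs]
    exact derivWithin_congr (fun y hy => congrFun iteratedDerivWithin_one y)
      (congrFun iteratedDerivWithin_one x)
  have hD : HasDerivAt (derivWithin f (Icc 0 1)) (Dn 2 f x) x := by
    rw [h2]; exact (hdiff.hasDerivWithinAt).hasDerivAt hmem
  apply hD.congr_of_eventuallyEq
  filter_upwards [hmem] with y hy
  exact congrFun iteratedDerivWithin_one y

/-- Integration by parts twice, with clamped boundary conditions on `u`. -/
lemma ibp {u w : ℝ → ℝ} (hu : ContDiffOn ℝ 2 u (Icc 0 1)) (hbc : ClampedBC u)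
    (hw : ContDiffOn ℝ 2 w (Icc 0 1)) :
    L2ip u (Dn 2 w) = L2ip (Dn 2 u) w := by
  set F : ℝ → ℝ := fun x => u x * Dn 1 w x - Dn 1 u x * w x with hF
  have hcont : ContinuousOn F (Icc 0 1) :=
    (hu.continuousOn.mul (contOn_Dn hw (by norm_num))).sub
      ((contOn_Dn hu (by norm_num)).mul hw.continuousOn)
  have hderiv : ∀ x ∈ Ioo (0:ℝ) 1,
      HasDerivWithinAt F (u x * Dn 2 w x - Dn 2 u x * w x) (Ioi x) x := by
    intro x hx
    have h1 := (hasDerivAt_of_mem hu hx).mul (hasDerivAt_Dn1 hw hx)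
    have h2 := (hasDerivAt_Dn1 hu hx).mul (hasDerivAt_of_mem hw hx)
    have h3 := h1.sub h2
    have heq : Dn 1 u x * Dn 1 w x + u x * Dn 2 w x - (Dn 2 u x * w x + Dn 1 u x * Dn 1 w x)
        = u x * Dn 2 w x - Dn 2 u x * w x := by ring
    rw [heq] at h3
    exact h3.hasDerivWithinAt
  have hiw : IntervalIntegrable (fun x => u x * Dn 2 w x) volume 0 1 :=
    II_mul hu.continuousOn (contOn_Dn hw (by norm_num))
  have hiu : IntervalIntegrable (fun x => Dn 2 u x * w x) volume 0 1 :=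
    II_mul (contOn_Dn hu (by norm_num)) hw.continuousOn
  have hint : IntervalIntegrable (fun x => u x * Dn 2 w x - Dn 2 u x * w x) volume 0 1 :=
    hiw.sub hiu
  have key := intervalIntegral.integral_eq_sub_of_hasDeriv_right_of_le zero_le_one hcont hderiv hint
  obtain ⟨h0, h0', h1', h1''⟩ := hbc
  have hzero : (∫ x in (0:ℝ)..1, (u x * Dn 2 w x - Dn 2 u x * w x)) = 0 := by
    rw [key, hF]; simp [h0, h0', h1', h1'']
  rw [intervalIntegral.integral_sub hiw hiu] at hzero
  simp only [L2ip]
  linarith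

lemma wbound {w I s t s' t' P Q : ℝ} (hw : 0 ≤ w) (hI : |I| ≤ s*t)
    (heq : w*(s*t) ≤ s'*t') (hs' : 0 ≤ s') (ht' : 0 ≤ t') (hsP : s' ≤ P) (htQ : t' ≤ Q) :
    |w*I| ≤ P*Q := by
  rw [abs_mul, abs_of_nonneg hw]
  calc w*|I| ≤ w*(s*t) := mul_le_mul_of_nonneg_left hI hw
    _ ≤ s'*t' := heq
    _ ≤ P*Q := mul_le_mul hsP htQ ht' (hs'.trans hsP)

/-- Uniform (in ε) continuity of the bilinear form B with respect to the balanced norm. -/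
theorem continuity_Bform (lam : ℝ) (hlam : 0 < lam) :
    ∃ C > 0, ∀ ε ∈ Ioc (0:ℝ) 1, ∀ u v us vs : ℝ → ℝ,
      ContDiffOn ℝ 2 u (Icc (0:ℝ) 1) → ClampedBC u →
      ContDiffOn ℝ 2 us (Icc (0:ℝ) 1) → ClampedBC us →
      ContDiffOn ℝ 2 v (Icc (0:ℝ) 1) →
      ContDiffOn ℝ 2 vs (Icc (0:ℝ) 1) →
      |Bform ε lam u v us vs| ≤ C * bal ε u v * bal ε us vs := by
  refine ⟨4*lam + 25, by linarith, ?_⟩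
  rintro ε ⟨hε0, hε1⟩ u v us vs hu hbcu hus hbcus hv hvs
  set a := ε ^ ((3:ℝ)/2) with hadef
  set b := ε ^ ((5:ℝ)/2) with hbdef
  have ha : 0 < a := Real.rpow_pos_of_pos hε0 _
  have hb : 0 < b := Real.rpow_pos_of_pos hε0 _
  have ha2 : a * a = ε^3 := by
    rw [hadef, ← Real.rpow_add hε0, ← Real.rpow_natCast ε 3]; norm_num
  have hba : b * a = ε^4 := by
    rw [hadef, hbdef, ← Real.rpow_add hε0, ← Real.rpow_natCast ε 4]; norm_num
  have hble : b ≤ ε^2 := by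
    rw [hbdef, ← Real.rpow_natCast ε 2]
    exact Real.rpow_le_rpow_of_exponent_ge hε0 hε1 (by norm_num)
  -- continuity facts
  have huc := hu.continuousOn
  have husc := hus.continuousOn
  have hvc := hv.continuousOn
  have hvsc := hvs.continuousOn
  have hUc : ContinuousOn (Dn 2 u) (Icc (0:ℝ) 1) := contOn_Dn hu (by norm_num)
  have hUsc : ContinuousOn (Dn 2 us) (Icc (0:ℝ) 1) := contOn_Dn hus (by norm_num)
  have hVc : ContinuousOn (Dn 2 v) (Icc (0:ℝ) 1) := contOn_Dn hv (by norm_num)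
  have hVsc : ContinuousOn (Dn 2 vs) (Icc (0:ℝ) 1) := contOn_Dn hvs (by norm_num)
  -- expansion of the bilinear form
  have hIa : L2ip (fun x => v x - a * Dn 2 u x) (fun x => vs x - a * Dn 2 us x)
      = L2ip v vs - a * L2ip v (Dn 2 us) - a * L2ip (Dn 2 u) vs
        + (a*a) * L2ip (Dn 2 u) (Dn 2 us) := by
    unfold L2ip
    rw [intervalIntegral.integral_congr
        (g := fun x => v x * vs x - a*(v x * Dn 2 us x) - a*(Dn 2 u x * vs x)
          + (a*a)*(Dn 2 u x * Dn 2 us x)) (fun x _ => by ring)]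
    rw [intervalIntegral.integral_add
          (((II_mul hvc hvsc).sub ((II_mul hvc hUsc).const_mul a)).sub
            ((II_mul hUc hvsc).const_mul a))
          ((II_mul hUc hUsc).const_mul (a*a)),
        intervalIntegral.integral_sub
          ((II_mul hvc hvsc).sub ((II_mul hvc hUsc).const_mul a))
          ((II_mul hUc hvsc).const_mul a),
        intervalIntegral.integral_sub (II_mul hvc hvsc) ((II_mul hvc hUsc).const_mul a),
        intervalIntegral.integral_const_mul, intervalIntegral.integral_const_mul,
        intervalIntegral.integral_const_mul]
  have hIb : L2ip (fun x => b * Dn 2 v x + 4 * u x) (fun x => a * Dn 2 vs x + 4 * us x)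
      = (b*a) * L2ip (Dn 2 v) (Dn 2 vs) + 4*(b * L2ip (Dn 2 v) us)
        + 4*(a * L2ip u (Dn 2 vs)) + 16 * L2ip u us := by
    unfold L2ip
    rw [intervalIntegral.integral_congr
        (g := fun x => (b*a)*(Dn 2 v x * Dn 2 vs x) + (4*b)*(Dn 2 v x * us x)
          + (4*a)*(u x * Dn 2 vs x) + (16:ℝ)*(u x * us x)) (fun x _ => by ring)]
    rw [intervalIntegral.integral_add
          ((((II_mul hVc hVsc).const_mul (b*a)).add ((II_mul hVc husc).const_mul (4*b))).add
            ((II_mul huc hVsc).const_mul (4*a)))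
          ((II_mul huc husc).const_mul 16),
        intervalIntegral.integral_add
          (((II_mul hVc hVsc).const_mul (b*a)).add ((II_mul hVc husc).const_mul (4*b)))
          ((II_mul huc hVsc).const_mul (4*a)),
        intervalIntegral.integral_add ((II_mul hVc hVsc).const_mul (b*a))
          ((II_mul hVc husc).const_mul (4*b)),
        intervalIntegral.integral_const_mul, intervalIntegral.integral_const_mul,
        intervalIntegral.integral_const_mul, intervalIntegral.integral_const_mul]
    ring
  have hibp : L2ip u (Dn 2 vs) = L2ip (Dn 2 u) vs := ibp hu hbcu hvs
  have hexp : Bform ε lam u v us vs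
      = lam * L2ip v vs - lam * (a * L2ip v (Dn 2 us)) - lam * (a * L2ip (Dn 2 u) vs)
        + lam * ((ε^3) * L2ip (Dn 2 u) (Dn 2 us))
        + ((ε^4) * L2ip (Dn 2 v) (Dn 2 vs) + 4*(b * L2ip (Dn 2 v) us)
           + 4*(a * L2ip (Dn 2 u) vs) + 16 * L2ip u us) := by
    rw [Bform, ← hadef, ← hbdef, hIa, hIb, hibp, ha2, hba]; ring
  -- balanced norm facts
  set P := bal ε u v with hPdef
  set Q := bal ε us vs with hQdef
  have hn1 : 0 ≤ ε^3 * L2nsq (Dn 2 u) := mul_nonneg (by positivity) (L2nsq_nonneg _)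
  have hn2 : 0 ≤ ε^4 * L2nsq (Dn 2 v) := mul_nonneg (by positivity) (L2nsq_nonneg _)
  have hn1s : 0 ≤ ε^3 * L2nsq (Dn 2 us) := mul_nonneg (by positivity) (L2nsq_nonneg _)
  have hn2s : 0 ≤ ε^4 * L2nsq (Dn 2 vs) := mul_nonneg (by positivity) (L2nsq_nonneg _)
  have hsq3 : a = Real.sqrt (ε^3) := by
    rw [hadef, Real.sqrt_eq_rpow, ← Real.rpow_natCast ε 3, ← Real.rpow_mul hε0.le]; norm_num
  have hsq4 : (ε^2 : ℝ) = Real.sqrt (ε^4) := by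
    rw [show (ε^4:ℝ) = (ε^2)^2 by ring, Real.sqrt_sq (by positivity)]
  -- the four component bounds for P
  have hPu : Real.sqrt (L2nsq u) ≤ P := by
    apply Real.sqrt_le_sqrt; nlinarith [L2nsq_nonneg v]
  have hPv : Real.sqrt (L2nsq v) ≤ P := by
    apply Real.sqrt_le_sqrt; nlinarith [L2nsq_nonneg u]
  have hPU : a * Real.sqrt (L2nsq (Dn 2 u)) ≤ P := by
    rw [hsq3, ← Real.sqrt_mul (by positivity)]
    apply Real.sqrt_le_sqrt; nlinarith [L2nsq_nonneg u, L2nsq_nonneg v]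
  have hPV : (ε^2) * Real.sqrt (L2nsq (Dn 2 v)) ≤ P := by
    rw [hsq4, ← Real.sqrt_mul (by positivity)]
    apply Real.sqrt_le_sqrt; nlinarith [L2nsq_nonneg u, L2nsq_nonneg v]
  have hQus : Real.sqrt (L2nsq us) ≤ Q := by
    apply Real.sqrt_le_sqrt; nlinarith [L2nsq_nonneg vs]
  have hQvs : Real.sqrt (L2nsq vs) ≤ Q := by
    apply Real.sqrt_le_sqrt; nlinarith [L2nsq_nonneg us]
  have hQUs : a * Real.sqrt (L2nsq (Dn 2 us)) ≤ Q := by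
    rw [hsq3, ← Real.sqrt_mul (by positivity)]
    apply Real.sqrt_le_sqrt; nlinarith [L2nsq_nonneg us, L2nsq_nonneg vs]
  have hQVs : (ε^2) * Real.sqrt (L2nsq (Dn 2 vs)) ≤ Q := by
    rw [hsq4, ← Real.sqrt_mul (by positivity)]
    apply Real.sqrt_le_sqrt; nlinarith [L2nsq_nonneg us, L2nsq_nonneg vs]
  -- Cauchy–Schwarz bounds on each term
  have h1 : |L2ip v vs| ≤ P*Q :=
    (cs hvc hvsc).trans (mul_le_mul hPv hQvs (Real.sqrt_nonneg _)
      ((Real.sqrt_nonneg _).trans hPv))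
  have h2 : |a * L2ip v (Dn 2 us)| ≤ P*Q :=
    wbound ha.le (cs hvc hUsc) (le_of_eq (by ring)) (Real.sqrt_nonneg _)
      (by positivity) hPv hQUs
  have h3 : |a * L2ip (Dn 2 u) vs| ≤ P*Q :=
    wbound ha.le (cs hUc hvsc) (le_of_eq (by ring)) (by positivity)
      (Real.sqrt_nonneg _) hPU hQvs
  have h4 : |(ε^3) * L2ip (Dn 2 u) (Dn 2 us)| ≤ P*Q :=
    wbound (by positivity) (cs hUc hUsc) (le_of_eq (by rw [← ha2]; ring))
      (by positivity) (by positivity) hPU hQUs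
  have h5 : |(ε^4) * L2ip (Dn 2 v) (Dn 2 vs)| ≤ P*Q :=
    wbound (by positivity) (cs hVc hVsc) (le_of_eq (by ring)) (by positivity)
      (by positivity) hPV hQVs
  have h6 : |b * L2ip (Dn 2 v) us| ≤ P*Q :=
    wbound hb.le (cs hVc husc)
      (by
        have hm := mul_le_mul_of_nonneg_right hble
          (mul_nonneg (Real.sqrt_nonneg (L2nsq (Dn 2 v))) (Real.sqrt_nonneg (L2nsq us)))
        linarith [hm])
      (by positivity) (Real.sqrt_nonneg _) hPV hQus
  have h8 : |L2ip u us| ≤ P*Q :=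
    (cs huc husc).trans (mul_le_mul hPu hQus (Real.sqrt_nonneg _)
      ((Real.sqrt_nonneg _).trans hPu))
  -- assemble
  have hl1 : |lam * L2ip v vs| ≤ lam * (P*Q) := by
    rw [abs_mul, abs_of_pos hlam]; exact mul_le_mul_of_nonneg_left h1 hlam.le
  have hl2 : |lam * (a * L2ip v (Dn 2 us))| ≤ lam * (P*Q) := by
    rw [abs_mul, abs_of_pos hlam]; exact mul_le_mul_of_nonneg_left h2 hlam.le
  have hl3 : |lam * (a * L2ip (Dn 2 u) vs)| ≤ lam * (P*Q) := by
    rw [abs_mul, abs_of_pos hlam]; exact mul_le_mul_of_nonneg_left h3 hlam.le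
  have hl4 : |lam * ((ε^3) * L2ip (Dn 2 u) (Dn 2 us))| ≤ lam * (P*Q) := by
    rw [abs_mul, abs_of_pos hlam]; exact mul_le_mul_of_nonneg_left h4 hlam.le
  obtain ⟨a1, b1⟩ := abs_le.mp hl1
  obtain ⟨a2, b2⟩ := abs_le.mp hl2
  obtain ⟨a3, b3⟩ := abs_le.mp hl3
  obtain ⟨a4, b4⟩ := abs_le.mp hl4
  obtain ⟨a5, b5⟩ := abs_le.mp h5
  obtain ⟨a6, b6⟩ := abs_le.mp h6
  obtain ⟨a7, b7⟩ := abs_le.mp h3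
  obtain ⟨a8, b8⟩ := abs_le.mp h8
  rw [hexp, abs_le]
  constructor <;> linarith
end
end

section
/- Let ε ∈ (0,1], λ ≥ 3, and let f : [0,1] → ℝ be continuous. Suppose (u₁,v₁) and (u₂,v₂) are two pairs with uᵢ ∈ C²([0,1]), uᵢ(0)=uᵢ'(0)=uᵢ(1)=uᵢ'(1)=0 and vᵢ ∈ C²([0,1]), such that for every test pair (u*,v*) (with u* ∈ C²([0,1]) vanishing with its first derivative at 0 and 1, and v* ∈ C²([0,1])) one has B((uᵢ,vᵢ),(u*,v*)) = ⟨f, ε^{3/2}v*'' + 4u*⟩ for i = 1,2. Then u₁ = u₂ and v₁ = v₂ on [0,1]. -/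
set_option maxHeartbeats 1000000

open MeasureTheory Set Real

noncomputable section

namespace WeakUniqAux

lemma uD : UniqueDiffOn ℝ (Icc (0:ℝ) 1) := uniqueDiffOn_Icc one_pos

lemma iig {g : ℝ → ℝ} (hg : ContinuousOn g (Icc (0:ℝ) 1)) :
    IntervalIntegrable g volume 0 1 := by
  apply ContinuousOn.intervalIntegrable
  rwa [uIcc_of_le (zero_le_one)]

lemma Dn1_eq {g : ℝ → ℝ} {x : ℝ} (hx : x ∈ Icc (0:ℝ) 1) :
    Dn 1 g x = derivWithin g (Icc (0:ℝ) 1) x :=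
  by unfold Dn; rw [iteratedDerivWithin_one]

lemma Dn2_eq {g : ℝ → ℝ} {x : ℝ} (hx : x ∈ Icc (0:ℝ) 1) :
    Dn 2 g x = derivWithin (Dn 1 g) (Icc (0:ℝ) 1) x :=
  by unfold Dn; rw [iteratedDerivWithin_succ]

lemma contOn_Dn1 {g : ℝ → ℝ} (hg : ContDiffOn ℝ 2 g (Icc (0:ℝ) 1)) :
    ContinuousOn (Dn 1 g) (Icc (0:ℝ) 1) :=
  hg.continuousOn_iteratedDerivWithin (by norm_num) uD

lemma contOn_Dn2 {g : ℝ → ℝ} (hg : ContDiffOn ℝ 2 g (Icc (0:ℝ) 1)) :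
    ContinuousOn (Dn 2 g) (Icc (0:ℝ) 1) :=
  hg.continuousOn_iteratedDerivWithin (by norm_num) uD

lemma cd1_Dn1 {g : ℝ → ℝ} (hg : ContDiffOn ℝ 2 g (Icc (0:ℝ) 1)) :
    ContDiffOn ℝ 1 (Dn 1 g) (Icc (0:ℝ) 1) := by
  have h : ContDiffOn ℝ 1 (derivWithin g (Icc (0:ℝ) 1)) (Icc (0:ℝ) 1) :=
    hg.derivWithin uD (by norm_num)
  exact h.congr fun x hx => Dn1_eq hx

lemma hasD1 {g : ℝ → ℝ} (hg : ContDiffOn ℝ 1 g (Icc (0:ℝ) 1)) {x : ℝ}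
    (hx : x ∈ Icc (0:ℝ) 1) :
    HasDerivWithinAt g (Dn 1 g x) (Icc (0:ℝ) 1) x := by
  rw [Dn1_eq hx]
  exact ((hg.differentiableOn one_ne_zero) x hx).hasDerivWithinAt

lemma ibp {p q : ℝ → ℝ} (hp : ContDiffOn ℝ 1 p (Icc (0:ℝ) 1))
    (hq : ContDiffOn ℝ 1 q (Icc (0:ℝ) 1)) (hq0 : q 0 = 0) (hq1 : q 1 = 0) :
    ∫ x in (0:ℝ)..1, Dn 1 p x * q x = - ∫ x in (0:ℝ)..1, p x * Dn 1 q x := by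
  have cp := hp.continuousOn
  have cq := hq.continuousOn
  have cp1 : ContinuousOn (Dn 1 p) (Icc (0:ℝ) 1) :=
    hp.continuousOn_iteratedDerivWithin (by norm_num) uD
  have cq1 : ContinuousOn (Dn 1 q) (Icc (0:ℝ) 1) :=
    hq.continuousOn_iteratedDerivWithin (by norm_num) uD
  have i1 : IntervalIntegrable (fun x => Dn 1 p x * q x) volume 0 1 := iig (cp1.mul cq)
  have i2 : IntervalIntegrable (fun x => p x * Dn 1 q x) volume 0 1 := iig (cp.mul cq1)
  have hFTC : ∫ x in (0:ℝ)..1, (Dn 1 p x * q x + p x * Dn 1 q x)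
      = p 1 * q 1 - p 0 * q 0 := by
    apply intervalIntegral.integral_eq_sub_of_hasDeriv_right_of_le zero_le_one
      (cp.mul cq) _ (i1.add i2)
    intro x hx
    have hx' : x ∈ Icc (0:ℝ) 1 := Ioo_subset_Icc_self hx
    have h := (hasD1 hp hx').mul (hasD1 hq hx')
    exact h.mono_of_mem_nhdsWithin (Icc_mem_nhdsGT_of_mem ⟨hx.1.le, hx.2⟩)
  rw [intervalIntegral.integral_add i1 i2] at hFTC
  rw [hq0, hq1] at hFTC
  linarith

lemma vanish {h : ℝ → ℝ} (hc : ContinuousOn h (Icc (0:ℝ) 1))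
    (hint : ∫ x in (0:ℝ)..1, h x * h x = 0) : EqOn h 0 (Icc (0:ℝ) 1) := by
  have hsq : ContinuousOn (fun x => h x * h x) (Icc (0:ℝ) 1) := hc.mul hc
  have h0 : (fun x => h x * h x) =ᵐ[volume.restrict (Ioc (0:ℝ) 1)] 0 :=
    (intervalIntegral.integral_eq_zero_iff_of_le_of_nonneg_ae zero_le_one
      (Filter.Eventually.of_forall fun x => mul_self_nonneg _) (iig hsq)).mp hint
  rw [Measure.restrict_congr_set Ioc_ae_eq_Icc] at h0
  have h2 : EqOn (fun x => h x * h x) 0 (Icc (0:ℝ) 1) :=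
    Measure.eqOn_of_ae_eq h0 hsq continuousOn_const
      (by rw [interior_Icc, closure_Ioo (by norm_num : (0:ℝ) ≠ 1)])
  intro x hx
  have := h2 hx
  simpa [mul_self_eq_zero] using this

end WeakUniqAux

open WeakUniqAux

/-- Uniqueness of the solution to the weak formulation. -/
theorem weak_uniqueness (ε lam : ℝ) (hε : ε ∈ Ioc (0:ℝ) 1) (hlam : 3 ≤ lam)
    (f : ℝ → ℝ) (hf : ContinuousOn f (Icc (0:ℝ) 1))
    (u₁ v₁ u₂ v₂ : ℝ → ℝ)
    (hu₁ : ContDiffOn ℝ 2 u₁ (Icc (0:ℝ) 1)) (hbc₁ : ClampedBC u₁)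
    (hv₁ : ContDiffOn ℝ 2 v₁ (Icc (0:ℝ) 1))
    (hu₂ : ContDiffOn ℝ 2 u₂ (Icc (0:ℝ) 1)) (hbc₂ : ClampedBC u₂)
    (hv₂ : ContDiffOn ℝ 2 v₂ (Icc (0:ℝ) 1))
    (hweak₁ : ∀ us vs : ℝ → ℝ,
      ContDiffOn ℝ 2 us (Icc (0:ℝ) 1) → ClampedBC us →
      ContDiffOn ℝ 2 vs (Icc (0:ℝ) 1) →
      Bform ε lam u₁ v₁ us vs
        = L2ip f (fun x => ε ^ ((3:ℝ)/2) * Dn 2 vs x + 4 * us x))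
    (hweak₂ : ∀ us vs : ℝ → ℝ,
      ContDiffOn ℝ 2 us (Icc (0:ℝ) 1) → ClampedBC us →
      ContDiffOn ℝ 2 vs (Icc (0:ℝ) 1) →
      Bform ε lam u₂ v₂ us vs
        = L2ip f (fun x => ε ^ ((3:ℝ)/2) * Dn 2 vs x + 4 * us x)) :
    EqOn u₁ u₂ (Icc (0:ℝ) 1) ∧ EqOn v₁ v₂ (Icc (0:ℝ) 1) := by
  obtain ⟨hε0, hε1⟩ := hε
  have ha0 : (0:ℝ) < ε ^ ((3:ℝ)/2) := rpow_pos_of_pos hε0 _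
  have hb0 : (0:ℝ) < ε ^ ((5:ℝ)/2) := rpow_pos_of_pos hε0 _
  have hba : ε ^ ((5:ℝ)/2) = ε * ε ^ ((3:ℝ)/2) := by
    rw [show (5:ℝ)/2 = 1 + 3/2 by norm_num, rpow_add hε0, rpow_one]
  set a := ε ^ ((3:ℝ)/2) with ha
  set b := ε ^ ((5:ℝ)/2) with hb
  set w : ℝ → ℝ := fun x => u₁ x - u₂ x with hwdef
  set z : ℝ → ℝ := fun x => v₁ x - v₂ x with hzdef
  have hw : ContDiffOn ℝ 2 w (Icc (0:ℝ) 1) := hu₁.sub hu₂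
  have hz : ContDiffOn ℝ 2 z (Icc (0:ℝ) 1) := hv₁.sub hv₂
  have hDw1 : ∀ x ∈ Icc (0:ℝ) 1, Dn 1 w x = Dn 1 u₁ x - Dn 1 u₂ x := fun x hx =>
    iteratedDerivWithin_sub hx uD ((hu₁ x hx).of_le (by norm_num)) ((hu₂ x hx).of_le (by norm_num))
  have hDw2 : ∀ x ∈ Icc (0:ℝ) 1, Dn 2 w x = Dn 2 u₁ x - Dn 2 u₂ x := fun x hx =>
    iteratedDerivWithin_sub hx uD ((hu₁ x hx).of_le (by norm_num)) ((hu₂ x hx).of_le (by norm_num))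
  have hDz2 : ∀ x ∈ Icc (0:ℝ) 1, Dn 2 z x = Dn 2 v₁ x - Dn 2 v₂ x := fun x hx =>
    iteratedDerivWithin_sub hx uD ((hv₁ x hx).of_le (by norm_num)) ((hv₂ x hx).of_le (by norm_num))
  have h01 : (0:ℝ) ∈ Icc (0:ℝ) 1 := left_mem_Icc.mpr zero_le_one
  have h11 : (1:ℝ) ∈ Icc (0:ℝ) 1 := right_mem_Icc.mpr zero_le_one
  have hbcw : ClampedBC w := by
    refine ⟨?_, ?_, ?_, ?_⟩
    · show u₁ 0 - u₂ 0 = 0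
      rw [hbc₁.1, hbc₂.1, sub_zero]
    · rw [hDw1 0 h01, hbc₁.2.1, hbc₂.2.1, sub_zero]
    · show u₁ 1 - u₂ 1 = 0
      rw [hbc₁.2.2.1, hbc₂.2.2.1, sub_zero]
    · rw [hDw1 1 h11, hbc₁.2.2.2, hbc₂.2.2.2, sub_zero]
  -- continuity facts
  have cw0 := hw.continuousOn
  have cz0 := hz.continuousOn
  have cw1 := contOn_Dn1 hw
  have cz1 := contOn_Dn1 hz
  have cw2 := contOn_Dn2 hw
  have cz2 := contOn_Dn2 hz
  have cu₁2 := contOn_Dn2 hu₁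
  have cu₂2 := contOn_Dn2 hu₂
  have cv₁2 := contOn_Dn2 hv₁
  have cv₂2 := contOn_Dn2 hv₂
  -- the basic identity from subtracting the two weak formulations
  have hB : Bform ε lam u₁ v₁ w z = Bform ε lam u₂ v₂ w z := by
    rw [hweak₁ w z hw hbcw hz, hweak₂ w z hw hbcw hz]
  simp only [Bform, L2ip] at hB
  rw [← ha, ← hb] at hB
  -- abbreviations for integrands
  have cT : ContinuousOn (fun x => z x - a * Dn 2 w x) (Icc (0:ℝ) 1) :=
    cz0.sub (continuousOn_const.mul cw2)
  have cS : ContinuousOn (fun x => a * Dn 2 z x + 4 * w x) (Icc (0:ℝ) 1) :=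
    (continuousOn_const.mul cz2).add (continuousOn_const.mul cw0)
  have cA₁ : ContinuousOn (fun x => v₁ x - a * Dn 2 u₁ x) (Icc (0:ℝ) 1) :=
    hv₁.continuousOn.sub (continuousOn_const.mul cu₁2)
  have cA₂ : ContinuousOn (fun x => v₂ x - a * Dn 2 u₂ x) (Icc (0:ℝ) 1) :=
    hv₂.continuousOn.sub (continuousOn_const.mul cu₂2)
  have cC₁ : ContinuousOn (fun x => b * Dn 2 v₁ x + 4 * u₁ x) (Icc (0:ℝ) 1) :=
    (continuousOn_const.mul cv₁2).add (continuousOn_const.mul hu₁.continuousOn)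
  have cC₂ : ContinuousOn (fun x => b * Dn 2 v₂ x + 4 * u₂ x) (Icc (0:ℝ) 1) :=
    (continuousOn_const.mul cv₂2).add (continuousOn_const.mul hu₂.continuousOn)
  have cCz : ContinuousOn (fun x => b * Dn 2 z x + 4 * w x) (Icc (0:ℝ) 1) :=
    (continuousOn_const.mul cz2).add (continuousOn_const.mul cw0)
  -- first difference
  have hI : (∫ x in (0:ℝ)..1, (v₁ x - a * Dn 2 u₁ x) * (z x - a * Dn 2 w x))
      - (∫ x in (0:ℝ)..1, (v₂ x - a * Dn 2 u₂ x) * (z x - a * Dn 2 w x))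
      = ∫ x in (0:ℝ)..1, (z x - a * Dn 2 w x) * (z x - a * Dn 2 w x) := by
    rw [← intervalIntegral.integral_sub (iig (cA₁.mul cT) : IntervalIntegrable (fun x => (v₁ x - a * Dn 2 u₁ x) * (z x - a * Dn 2 w x)) volume 0 1) (iig (cA₂.mul cT) : IntervalIntegrable (fun x => (v₂ x - a * Dn 2 u₂ x) * (z x - a * Dn 2 w x)) volume 0 1)]
    apply intervalIntegral.integral_congr
    intro x hx
    rw [uIcc_of_le zero_le_one] at hx
    simp only
    rw [hDw2 x hx]
    simp only [hzdef]
    ring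
  have hJ : (∫ x in (0:ℝ)..1, (b * Dn 2 v₁ x + 4 * u₁ x) * (a * Dn 2 z x + 4 * w x))
      - (∫ x in (0:ℝ)..1, (b * Dn 2 v₂ x + 4 * u₂ x) * (a * Dn 2 z x + 4 * w x))
      = ∫ x in (0:ℝ)..1, (b * Dn 2 z x + 4 * w x) * (a * Dn 2 z x + 4 * w x) := by
    rw [← intervalIntegral.integral_sub (iig (cC₁.mul cS) : IntervalIntegrable (fun x => (b * Dn 2 v₁ x + 4 * u₁ x) * (a * Dn 2 z x + 4 * w x)) volume 0 1) (iig (cC₂.mul cS) : IntervalIntegrable (fun x => (b * Dn 2 v₂ x + 4 * u₂ x) * (a * Dn 2 z x + 4 * w x)) volume 0 1)]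
    apply intervalIntegral.integral_congr
    intro x hx
    rw [uIcc_of_le zero_le_one] at hx
    simp only
    rw [hDz2 x hx]
    simp only [hwdef]
    ring
  have hE : lam * (∫ x in (0:ℝ)..1, (z x - a * Dn 2 w x) * (z x - a * Dn 2 w x))
      + (∫ x in (0:ℝ)..1, (b * Dn 2 z x + 4 * w x) * (a * Dn 2 z x + 4 * w x)) = 0 := by
    rw [← hI, ← hJ]
    linarith [hB]
  -- integration by parts
  have hR : ∫ x in (0:ℝ)..1, z x * Dn 2 w x
      = - ∫ x in (0:ℝ)..1, Dn 1 z x * Dn 1 w x := by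
    have h1 := ibp (hz.of_le one_le_two) (cd1_Dn1 hw) hbcw.2.1 hbcw.2.2.2
    have h2 : ∫ x in (0:ℝ)..1, z x * Dn 1 (Dn 1 w) x
        = ∫ x in (0:ℝ)..1, z x * Dn 2 w x := by
      apply intervalIntegral.integral_congr
      intro x hx
      rw [uIcc_of_le zero_le_one] at hx
      show z x * Dn 1 (Dn 1 w) x = z x * Dn 2 w x
      rw [Dn1_eq hx, ← Dn2_eq hx]
    rw [h2] at h1
    linarith
  have hQ : ∫ x in (0:ℝ)..1, Dn 2 z x * w x
      = - ∫ x in (0:ℝ)..1, Dn 1 z x * Dn 1 w x := by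
    have h1 := ibp (cd1_Dn1 hz) (hw.of_le one_le_two) hbcw.1 hbcw.2.2.1
    have h2 : ∫ x in (0:ℝ)..1, Dn 1 (Dn 1 z) x * w x
        = ∫ x in (0:ℝ)..1, Dn 2 z x * w x := by
      apply intervalIntegral.integral_congr
      intro x hx
      rw [uIcc_of_le zero_le_one] at hx
      show Dn 1 (Dn 1 z) x * w x = Dn 2 z x * w x
      rw [Dn1_eq hx, ← Dn2_eq hx]
    rw [h2] at h1
    linarith
  have hQR : ∫ x in (0:ℝ)..1, Dn 2 z x * w x = ∫ x in (0:ℝ)..1, z x * Dn 2 w x := by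
    rw [hQ, hR]
  -- expansions
  have iZ0 : IntervalIntegrable (fun x => z x * z x) volume 0 1 := iig (cz0.mul cz0)
  have iW0 : IntervalIntegrable (fun x => w x * w x) volume 0 1 := iig (cw0.mul cw0)
  have iZ2 : IntervalIntegrable (fun x => Dn 2 z x * Dn 2 z x) volume 0 1 := iig (cz2.mul cz2)
  have iW2 : IntervalIntegrable (fun x => Dn 2 w x * Dn 2 w x) volume 0 1 := iig (cw2.mul cw2)
  have iR : IntervalIntegrable (fun x => z x * Dn 2 w x) volume 0 1 := iig (cz0.mul cw2)
  have iQ : IntervalIntegrable (fun x => Dn 2 z x * w x) volume 0 1 := iig (cz2.mul cw0)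
  have hExp1 : ∫ x in (0:ℝ)..1, (z x - a * Dn 2 w x) * (z x - a * Dn 2 w x)
      = (∫ x in (0:ℝ)..1, z x * z x) - (2*a) * (∫ x in (0:ℝ)..1, z x * Dn 2 w x)
        + a^2 * (∫ x in (0:ℝ)..1, Dn 2 w x * Dn 2 w x) := by
    have heq : (fun x => (z x - a * Dn 2 w x) * (z x - a * Dn 2 w x))
        = fun x => (z x * z x - (2*a) * (z x * Dn 2 w x)) + a^2 * (Dn 2 w x * Dn 2 w x) := by
      funext x; ring
    rw [heq, intervalIntegral.integral_add (iZ0.sub (iR.const_mul _)) (iW2.const_mul _),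
      intervalIntegral.integral_sub iZ0 (iR.const_mul _),
      intervalIntegral.integral_const_mul, intervalIntegral.integral_const_mul]
  have hExp2 : ∫ x in (0:ℝ)..1, (b * Dn 2 z x + 4 * w x) * (a * Dn 2 z x + 4 * w x)
      = (a*b) * (∫ x in (0:ℝ)..1, Dn 2 z x * Dn 2 z x)
        + (4*a + 4*b) * (∫ x in (0:ℝ)..1, Dn 2 z x * w x)
        + 16 * (∫ x in (0:ℝ)..1, w x * w x) := by
    have heq : (fun x => (b * Dn 2 z x + 4 * w x) * (a * Dn 2 z x + 4 * w x))
        = fun x => ((a*b) * (Dn 2 z x * Dn 2 z x) + (4*a + 4*b) * (Dn 2 z x * w x))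
          + 16 * (w x * w x) := by
      funext x; ring
    rw [heq, intervalIntegral.integral_add ((iZ2.const_mul _).add (iQ.const_mul _))
        (iW0.const_mul _),
      intervalIntegral.integral_add (iZ2.const_mul _) (iQ.const_mul _),
      intervalIntegral.integral_const_mul, intervalIntegral.integral_const_mul,
      intervalIntegral.integral_const_mul]
  -- the coercivity bound
  have hcomb : -( (lam-1) * (∫ x in (0:ℝ)..1, z x * z x)
        + (lam-1) * a^2 * (∫ x in (0:ℝ)..1, Dn 2 w x * Dn 2 w x))
      ≤ (-(2*lam*a - 4*a - 4*b)) * (∫ x in (0:ℝ)..1, z x * Dn 2 w x) := by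
    have hmono : (∫ x in (0:ℝ)..1,
          ((-(lam-1)) * (z x * z x) + (-((lam-1) * a^2)) * (Dn 2 w x * Dn 2 w x)))
        ≤ ∫ x in (0:ℝ)..1, (-(2*lam*a - 4*a - 4*b)) * (z x * Dn 2 w x) := by
      apply intervalIntegral.integral_mono_on zero_le_one
        ((iZ0.const_mul _).add (iW2.const_mul _)) (iR.const_mul _)
      intro x hx
      have q1 : 0 ≤ (1 + 2*ε) * (z x + a * Dn 2 w x)^2 :=
        mul_nonneg (by linarith) (sq_nonneg _)
      have q2 : 0 ≤ (2*lam - 3 - 2*ε) * (z x - a * Dn 2 w x)^2 :=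
        mul_nonneg (by nlinarith) (sq_nonneg _)
      rw [hba]
      nlinarith [q1, q2]
    rw [intervalIntegral.integral_add (iZ0.const_mul _) (iW2.const_mul _),
      intervalIntegral.integral_const_mul, intervalIntegral.integral_const_mul,
      intervalIntegral.integral_const_mul] at hmono
    linarith
  -- nonnegativity
  have hZ0n : 0 ≤ ∫ x in (0:ℝ)..1, z x * z x :=
    intervalIntegral.integral_nonneg zero_le_one (fun x _ => mul_self_nonneg _)
  have hW0n : 0 ≤ ∫ x in (0:ℝ)..1, w x * w x :=
    intervalIntegral.integral_nonneg zero_le_one (fun x _ => mul_self_nonneg _)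
  have hZ2n : 0 ≤ ∫ x in (0:ℝ)..1, Dn 2 z x * Dn 2 z x :=
    intervalIntegral.integral_nonneg zero_le_one (fun x _ => mul_self_nonneg _)
  have hW2n : 0 ≤ ∫ x in (0:ℝ)..1, Dn 2 w x * Dn 2 w x :=
    intervalIntegral.integral_nonneg zero_le_one (fun x _ => mul_self_nonneg _)
  have habZ2 : 0 ≤ (a*b) * (∫ x in (0:ℝ)..1, Dn 2 z x * Dn 2 z x) :=
    mul_nonneg (mul_nonneg ha0.le hb0.le) hZ2n
  have haW2 : 0 ≤ a^2 * (∫ x in (0:ℝ)..1, Dn 2 w x * Dn 2 w x) :=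
    mul_nonneg (sq_nonneg _) hW2n
  -- conclude the integrals of squares vanish
  rw [hExp1, hExp2, hQR] at hE
  have hlam1 : (1:ℝ) ≤ lam := by linarith
  have hZ00 : (∫ x in (0:ℝ)..1, z x * z x) = 0 :=
    le_antisymm (by linarith [hE, hcomb, habZ2, haW2, hW0n]) hZ0n
  have hW00 : (∫ x in (0:ℝ)..1, w x * w x) = 0 :=
    le_antisymm (by linarith [hE, hcomb, habZ2, haW2, hZ0n]) hW0n
  have hwz := vanish cw0 hW00
  have hzz := vanish cz0 hZ00
  constructor
  · intro x hx
    have := hwz hx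
    simp only [hwdef, Pi.zero_apply] at this
    linarith
  · intro x hx
    have := hzz hx
    simp only [hzdef, Pi.zero_apply] at this
    linarith
end
end

section
/- Let p ≥ 3 be an integer, let a < b be real numbers, and let w : [a,b] → ℝ be (p+1)-times continuously differentiable. If P is a polynomial of degree at most p with P(a) = w(a), P'(a) = w'(a), and ∫_a^b (P − w)''(x) q(x) dx = 0 for every polynomial q of degree at most p−2, then also P(b) = w(b) and P'(b) = w'(b). -/
open MeasureTheory Set Real Polynomial

noncomputable section

/-- The local interpolant automatically matches w and w' at the right endpoint b. -/
theorem local_interpolant_right_endpoint (p : ℕ) (hp : 3 ≤ p) (a b : ℝ) (hab : a < b)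
    (w : ℝ → ℝ) (hw : ContDiffOn ℝ (p+1 : ℕ) w (Icc a b))
    (P : Polynomial ℝ) (hdeg : P.natDegree ≤ p)
    (hPa : P.eval a = w a)
    (hP'a : (Polynomial.derivative P).eval a = derivWithin w (Icc a b) a)
    (horth : ∀ q : Polynomial ℝ, q.natDegree ≤ p - 2 →
      (∫ x in a..b,
        ((Polynomial.derivative (Polynomial.derivative P)).eval x
          - iteratedDerivWithin 2 w (Icc a b) x) * q.eval x) = 0) :
    P.eval b = w b ∧ (Polynomial.derivative P).eval b = derivWithin w (Icc a b) b := by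
  have hu : UniqueDiffOn ℝ (Icc a b) := uniqueDiffOn_Icc hab
  set w1 : ℝ → ℝ := derivWithin w (Icc a b) with hw1def
  set W2 : ℝ → ℝ := iteratedDerivWithin 2 w (Icc a b) with hW2def
  have h2n : (1 : WithTop ℕ∞) + 1 ≤ ((p+1 : ℕ) : WithTop ℕ∞) := by
    have h2 : ((2:ℕ) : WithTop ℕ∞) ≤ ((p+1:ℕ) : WithTop ℕ∞) := by
      exact_mod_cast (by omega : (2:ℕ) ≤ p+1)
    simpa [one_add_one_eq_two] using h2
  have hw1 : ContDiffOn ℝ 1 w1 (Icc a b) := hw.derivWithin hu h2n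
  have hw1cont : ContinuousOn w1 (Icc a b) := hw1.continuousOn
  have hwcont : ContinuousOn w (Icc a b) := hw.continuousOn
  have hW2cont : ContinuousOn W2 (Icc a b) := by
    apply hw.continuousOn_iteratedDerivWithin _ hu
    exact_mod_cast (by omega : (2:ℕ) ≤ p + 1)
  -- derivative of w1 within Icc equals W2
  have hderivw1 : ∀ x ∈ Icc a b, HasDerivWithinAt w1 (W2 x) (Icc a b) x := by
    intro x hx
    have hdiff : DifferentiableOn ℝ w1 (Icc a b) := hw1.differentiableOn one_ne_zero
    have h := (hdiff x hx).hasDerivWithinAt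
    have heq : derivWithin w1 (Icc a b) x = W2 x := by
      rw [hW2def, iteratedDerivWithin_succ', iteratedDerivWithin_one]
    rwa [heq] at h
  have hderivw : ∀ x ∈ Icc a b, HasDerivWithinAt w (w1 x) (Icc a b) x := by
    intro x hx
    have hdiff : DifferentiableOn ℝ w (Icc a b) := hw.differentiableOn (by
      exact_mod_cast (by omega : p + 1 ≠ 0))
    exact (hdiff x hx).hasDerivWithinAt
  set g : ℝ → ℝ := fun x => (Polynomial.derivative P).eval x - w1 x with hgdef
  set f : ℝ → ℝ := fun x => P.eval x - w x with hfdef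
  set φ : ℝ → ℝ := fun x =>
    (Polynomial.derivative (Polynomial.derivative P)).eval x - W2 x with hφdef
  have hφcont : ContinuousOn φ (Icc a b) :=
    ((Polynomial.derivative (Polynomial.derivative P)).continuousOn).sub hW2cont
  have hgcont : ContinuousOn g (Icc a b) :=
    ((Polynomial.derivative P).continuousOn).sub hw1cont
  have hfcont : ContinuousOn f (Icc a b) := P.continuousOn.sub hwcont
  have hmem : ∀ x ∈ Ioo a b, Icc a b ∈ nhds x := fun x hx => Icc_mem_nhds hx.1 hx.2
  have hga : g a = 0 := by simp [hgdef, hP'a]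
  have hfa : f a = 0 := by simp [hfdef, hPa]
  -- first: q = 1
  have hq1 := horth 1 (by simp)
  have hint1 : IntervalIntegrable φ volume a b := by
    apply ContinuousOn.intervalIntegrable
    rwa [uIcc_of_le hab.le]
  have hftc1 : (∫ x in a..b, φ x) = g b - g a := by
    apply intervalIntegral.integral_eq_sub_of_hasDerivAt_of_le hab.le hgcont _ hint1
    intro x hx
    have h1 : HasDerivAt (fun y => (Polynomial.derivative P).eval y)
        ((Polynomial.derivative (Polynomial.derivative P)).eval x) x :=
      (Polynomial.derivative P).hasDerivAt x
    have h2 : HasDerivAt w1 (W2 x) x :=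
      ((hderivw1 x (Ioo_subset_Icc_self hx)).hasDerivAt (hmem x hx))
    exact h1.sub h2
  have hgb : g b = 0 := by
    have : (∫ x in a..b, φ x * (1:Polynomial ℝ).eval x) = (∫ x in a..b, φ x) := by
      simp
    rw [this, hftc1, hga, sub_zero] at hq1
    exact hq1
  -- second: q = C b - X
  have hqd : ((Polynomial.C b - Polynomial.X : Polynomial ℝ)).natDegree ≤ p - 2 := by
    have : ((Polynomial.C b - Polynomial.X : Polynomial ℝ)).natDegree ≤ 1 := by
      apply Polynomial.natDegree_sub_le_iff_left _ |>.mpr <;> simp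
    omega
  have hq2 := horth (Polynomial.C b - Polynomial.X) hqd
  set h : ℝ → ℝ := fun x => f x + g x * (b - x) with hhdef
  have hhcont : ContinuousOn h (Icc a b) :=
    hfcont.add (hgcont.mul (continuousOn_const.sub continuousOn_id))
  have hint2 : IntervalIntegrable (fun x => φ x * (b - x)) volume a b := by
    apply ContinuousOn.intervalIntegrable
    rw [uIcc_of_le hab.le]
    exact hφcont.mul (continuousOn_const.sub continuousOn_id)
  have hftc2 : (∫ x in a..b, φ x * (b - x)) = h b - h a := by
    apply intervalIntegral.integral_eq_sub_of_hasDerivAt_of_le hab.le hhcont _ hint2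
    intro x hx
    have hxI := Ioo_subset_Icc_self hx
    have hP' : HasDerivAt (fun y => P.eval y) ((Polynomial.derivative P).eval x) x :=
      P.hasDerivAt x
    have hwD : HasDerivAt w (w1 x) x := (hderivw x hxI).hasDerivAt (hmem x hx)
    have hfD : HasDerivAt f (g x) x := hP'.sub hwD
    have hgD : HasDerivAt g (φ x) x :=
      ((Polynomial.derivative P).hasDerivAt x).sub
        ((hderivw1 x hxI).hasDerivAt (hmem x hx))
    have hbx : HasDerivAt (fun y : ℝ => b - y) (-1) x := by
      simpa using (hasDerivAt_id x).const_sub b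
    have := hfD.add (hgD.mul hbx)
    convert this using 1
    · rfl
    ring
  have hfb : f b = 0 := by
    have heq : (∫ x in a..b, φ x * (Polynomial.C b - Polynomial.X : Polynomial ℝ).eval x)
        = ∫ x in a..b, φ x * (b - x) := by
      apply intervalIntegral.integral_congr
      intro x _
      simp
    rw [heq, hftc2] at hq2
    have : h b = 0 ∧ h a = 0 → f b = 0 := by
      intro ⟨h1, _⟩
      simpa [hhdef, hgb] using h1
    apply this
    constructor
    · have ha0 : h a = 0 := by simp [hhdef, hfa, hga]
      rw [ha0, sub_zero] at hq2
      exact hq2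
    · simp [hhdef, hfa, hga]
  constructor
  · have := hfb; simpa [hfdef, sub_eq_zero] using this
  · have := hgb; simpa [hgdef, sub_eq_zero] using this
end
end

section
/- Let p ≥ 3 be an integer. There exists a constant C > 0 depending only on p with the following property: for all real a < b with h := b − a and every (p+1)-times continuously differentiable w : [a,b] → ℝ, the polynomial P of degree at most p determined by P(a) = w(a), P'(a) = w'(a) and ∫_a^b (P−w)'' q = 0 for all polynomials q of degree at most p−2 satisfies ‖(P − w)^{(κ)}‖_{L²(a,b)} ≤ C h^{p+1−κ} ‖w^{(p+1)}‖_{L²(a,b)} for κ = 0, 1, 2, where ‖f‖_{L²(a,b)} = (∫_a^b f(x)² dx)^{1/2}. -/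
open MeasureTheory Set Real Polynomial
open intervalIntegral

noncomputable section

lemma myInt {a b : ℝ} (hab : a ≤ b) {f : ℝ → ℝ} (hf : ContinuousOn f (Icc a b)) :
    IntervalIntegrable f volume a b :=
  ContinuousOn.intervalIntegrable (by rwa [uIcc_of_le hab])

-- Cauchy-Schwarz for interval integrals of continuous functions
lemma myCS {a b : ℝ} (hab : a ≤ b) {f g : ℝ → ℝ}
    (hf : ContinuousOn f (Icc a b)) (hg : ContinuousOn g (Icc a b)) :
    ∫ x in a..b, f x * g x ≤
      Real.sqrt (∫ x in a..b, f x ^ 2) * Real.sqrt (∫ x in a..b, g x ^ 2) := by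
  set A := ∫ x in a..b, f x ^ 2 with hA
  set B := ∫ x in a..b, f x * g x with hB
  set C := ∫ x in a..b, g x ^ 2 with hC
  have hA0 : 0 ≤ A := integral_nonneg hab (fun x _ => sq_nonneg _)
  have hC0 : 0 ≤ C := integral_nonneg hab (fun x _ => sq_nonneg _)
  have hiff : IntervalIntegrable (fun x => f x ^ 2) volume a b := myInt hab (hf.pow 2)
  have higg : IntervalIntegrable (fun x => g x ^ 2) volume a b := myInt hab (hg.pow 2)
  have hifg : IntervalIntegrable (fun x => f x * g x) volume a b := myInt hab (hf.mul hg)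
  have key : ∀ t : ℝ, 0 ≤ C * (t * t) + (2 * B) * t + A := by
    intro t
    have expand : ∀ x, (f x + t * g x) ^ 2 = (t * t) * g x ^ 2 + t * (2 * (f x * g x)) + f x ^ 2 := by
      intro x; ring
    have h1 : (0:ℝ) ≤ ∫ x in a..b, (f x + t * g x) ^ 2 :=
      integral_nonneg hab (fun x _ => sq_nonneg _)
    have h2 : (∫ x in a..b, (f x + t * g x) ^ 2) = C * (t * t) + (2 * B) * t + A := by
      simp_rw [expand]
      rw [integral_add (((higg.const_mul (t*t)).add ((hifg.const_mul 2).const_mul t))) hiff,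
        integral_add (higg.const_mul (t*t)) ((hifg.const_mul 2).const_mul t),
        intervalIntegral.integral_const_mul, intervalIntegral.integral_const_mul, intervalIntegral.integral_const_mul]
      ring
    linarith [h2 ▸ h1]
  have hd := discrim_le_zero key
  rw [discrim] at hd
  have hB2 : B ^ 2 ≤ A * C := by nlinarith
  calc B ≤ |B| := le_abs_self B
    _ = Real.sqrt (B ^ 2) := (Real.sqrt_sq_eq_abs B).symm
    _ ≤ Real.sqrt (A * C) := Real.sqrt_le_sqrt hB2
    _ = Real.sqrt A * Real.sqrt C := Real.sqrt_mul hA0 C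

-- FTC: if F a = 0 and F' = g on the interior, then F x = ∫_a^x g
lemma myFTC {a b : ℝ} (hab : a ≤ b) {F g : ℝ → ℝ}
    (hF : ContinuousOn F (Icc a b)) (hg : ContinuousOn g (Icc a b))
    (hFa : F a = 0)
    (hder : ∀ x ∈ Ioo a b, HasDerivAt F (g x) x) :
    ∀ x ∈ Icc a b, F x = ∫ t in a..x, g t := by
  intro x hx
  have h1 : ∫ t in a..x, g t = F x - F a := by
    apply integral_eq_sub_of_hasDeriv_right_of_le hx.1
      (hF.mono (Icc_subset_Icc le_rfl hx.2))
      (fun t ht => ((hder t ⟨ht.1, lt_of_lt_of_le ht.2 hx.2⟩).hasDerivWithinAt))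
      (myInt hx.1 (hg.mono (Icc_subset_Icc le_rfl hx.2)))
  rw [h1, hFa, sub_zero]

-- Poincaré-type: L² norm of a primitive
lemma myPoincare {a b : ℝ} (hab : a < b) {F g : ℝ → ℝ}
    (hg : ContinuousOn g (Icc a b))
    (hF : ∀ x ∈ Icc a b, F x = ∫ t in a..x, g t) :
    Real.sqrt (∫ x in a..b, F x ^ 2) ≤ (b - a) * Real.sqrt (∫ x in a..b, g x ^ 2) := by
  have hab' := hab.le
  set M := Real.sqrt (∫ x in a..b, g x ^ 2) with hM
  have hM0 : 0 ≤ M := Real.sqrt_nonneg _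
  have hgabs : ContinuousOn (fun x => |g x|) (Icc a b) := hg.abs
  have hKbound : ∫ t in a..b, |g t| ≤ Real.sqrt (b - a) * M := by
    have h1 : (∫ t in a..b, |g t|) = ∫ t in a..b, (1:ℝ) * |g t| := by simp
    rw [h1]
    calc ∫ t in a..b, (1:ℝ) * |g t|
        ≤ Real.sqrt (∫ t in a..b, (1:ℝ) ^ 2) * Real.sqrt (∫ t in a..b, |g t| ^ 2) :=
          myCS hab' continuousOn_const hgabs
      _ = Real.sqrt (b - a) * M := by
          rw [hM]; congr 1
          · norm_num
          · congr 1; apply integral_congr; intro x _; simp [sq_abs]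
  -- pointwise bound on F
  have hFb : ∀ x ∈ Icc a b, |F x| ≤ Real.sqrt (b - a) * M := by
    intro x hx
    rw [hF x hx]
    calc |∫ t in a..x, g t| ≤ ∫ t in a..x, |g t| :=
          abs_integral_le_integral_abs hx.1
      _ ≤ ∫ t in a..b, |g t| := by
          apply integral_mono_interval le_rfl hx.1 hx.2
          · exact Filter.Eventually.of_forall (fun t => abs_nonneg _)
          · exact myInt hab' hgabs
      _ ≤ Real.sqrt (b - a) * M := hKbound
  have hsq : ∀ x ∈ Icc a b, F x ^ 2 ≤ (b - a) * M ^ 2 := by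
    intro x hx
    have h2 : F x ^ 2 = |F x| ^ 2 := (sq_abs _).symm
    rw [h2]
    calc |F x| ^ 2 ≤ (Real.sqrt (b - a) * M) ^ 2 := by
          apply pow_le_pow_left₀ (abs_nonneg _) (hFb x hx)
      _ = (b - a) * M ^ 2 := by
          rw [mul_pow, Real.sq_sqrt (by linarith)]
  -- integrate
  have hFcont : ContinuousOn F (Icc a b) := by
    have hprim : ContinuousOn (fun x => ∫ t in a..x, g t) (Icc a b) := by
      have h := continuousOn_primitive_interval (f := g) (a := a) (b := b) (μ := volume)
        (by rw [uIcc_of_le hab']; exact hg.integrableOn_Icc)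
      rwa [uIcc_of_le hab'] at h
    exact hprim.congr hF
  have hint : (∫ x in a..b, F x ^ 2) ≤ ∫ x in a..b, (b - a) * M ^ 2 := by
    apply integral_mono_on hab' (myInt hab' (hFcont.pow 2)) (myInt hab' continuousOn_const) hsq
  have hconst : (∫ x in a..b, (b - a) * M ^ 2) = (b - a) * ((b - a) * M ^ 2) := by
    simp [intervalIntegral.integral_const, smul_eq_mul]
  calc Real.sqrt (∫ x in a..b, F x ^ 2) ≤ Real.sqrt ((b - a) * ((b - a) * M ^ 2)) := by
        apply Real.sqrt_le_sqrt; rw [← hconst]; exact hint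
    _ = (b - a) * M := by
        rw [show (b-a) * ((b-a) * M^2) = ((b-a)*M)^2 by ring,
          Real.sqrt_sq (mul_nonneg (by linarith) hM0)]

lemma polyIDW : ∀ (n : ℕ) (P : Polynomial ℝ) {s : Set ℝ} (hs : UniqueDiffOn ℝ s)
    {x : ℝ} (hx : x ∈ s),
    iteratedDerivWithin n (fun y => P.eval y) s x = (derivative^[n] P).eval x := by
  intro n
  induction n with
  | zero => intro P s hs x hx; simp
  | succ n ih =>
    intro P s hs x hx
    rw [iteratedDerivWithin_succ']
    have e1 : Set.EqOn (derivWithin (fun y => P.eval y) s)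
        (fun y => (derivative P).eval y) s := fun y hy =>
      ((P.hasDerivAt y).hasDerivWithinAt).derivWithin (hs y hy)
    calc iteratedDerivWithin n (derivWithin (fun y => P.eval y) s) s x
        = iteratedDerivWithin n (fun y => (derivative P).eval y) s x :=
          iteratedDerivWithin_congr e1 hx
      _ = (derivative^[n] (derivative P)).eval x := ih _ hs hx
      _ = (derivative^[n+1] P).eval x := by rw [Function.iterate_succ_apply]

lemma myHasDerivAt {a b : ℝ} (hab : a < b) {u : ℝ → ℝ} {n j : ℕ}
    (hu : ContDiffOn ℝ n u (Icc a b)) (hj : j + 1 ≤ n) {x : ℝ} (hx : x ∈ Ioo a b) :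
    HasDerivAt (iteratedDerivWithin j u (Icc a b))
      (iteratedDerivWithin (j+1) u (Icc a b) x) x := by
  have hs := uniqueDiffOn_Icc hab
  have hxs : x ∈ Icc a b := Ioo_subset_Icc_self hx
  have hmem : Icc a b ∈ nhds x := Icc_mem_nhds hx.1 hx.2
  have hjn : (j : WithTop ℕ∞) < (n : ℕ) := by exact_mod_cast Nat.lt_of_succ_le hj
  have hd : DifferentiableWithinAt ℝ (iteratedDerivWithin j u (Icc a b)) (Icc a b) x :=
    (hu.differentiableOn_iteratedDerivWithin hjn hs) x hxs
  have h2 := hd.hasDerivWithinAt.hasDerivAt hmem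
  rwa [← iteratedDerivWithin_succ] at h2

lemma myContOn {a b : ℝ} (hab : a < b) {w : ℝ → ℝ} {n m : ℕ}
    (hw : ContDiffOn ℝ n w (Icc a b)) (hm : m ≤ n) :
    ContinuousOn (iteratedDerivWithin m w (Icc a b)) (Icc a b) :=
  hw.continuousOn_iteratedDerivWithin (by exact_mod_cast hm) (uniqueDiffOn_Icc hab)

lemma myTaylorBound {a b : ℝ} (hab : a < b) {w : ℝ → ℝ} {n : ℕ}
    (hw : ContDiffOn ℝ n w (Icc a b)) :
    ∀ j : ℕ, j ≤ n →
    Real.sqrt (∫ x in a..b, (iteratedDerivWithin (n-j) w (Icc a b) x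
        - ∑ i ∈ Finset.range j,
            iteratedDerivWithin (n-j+i) w (Icc a b) a / (i.factorial : ℝ) * (x-a)^i) ^ 2)
      ≤ (b-a)^j * Real.sqrt (∫ x in a..b, (iteratedDerivWithin n w (Icc a b) x)^2) := by
  have hab' := hab.le
  set s := Icc a b with hsdef
  intro j
  induction j with
  | zero =>
    intro _
    simp
  | succ j ih =>
    intro hj1
    have hj : j ≤ n := le_trans (Nat.le_succ j) hj1
    -- the functions
    set Ej : ℝ → ℝ := fun x => iteratedDerivWithin (n-j) w s x
        - ∑ i ∈ Finset.range j,
            iteratedDerivWithin (n-j+i) w s a / (i.factorial : ℝ) * (x-a)^i with hEj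
    set Ej1 : ℝ → ℝ := fun x => iteratedDerivWithin (n-(j+1)) w s x
        - ∑ i ∈ Finset.range (j+1),
            iteratedDerivWithin (n-(j+1)+i) w s a / (i.factorial : ℝ) * (x-a)^i with hEj1
    -- continuity
    have hTcont : ∀ (k : ℕ) (c : ℕ → ℝ), ContinuousOn
        (fun x : ℝ => ∑ i ∈ Finset.range k, c i * (x-a)^i) s := by
      intro k c
      apply continuousOn_finset_sum
      intro i _
      exact (continuousOn_const.mul (((continuousOn_id).sub continuousOn_const).pow i))
    have hEjcont : ContinuousOn Ej s :=
      (myContOn hab hw (Nat.sub_le n j)).sub (hTcont j _)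
    have hEj1cont : ContinuousOn Ej1 s :=
      (myContOn hab hw (Nat.sub_le n (j+1))).sub (hTcont (j+1) _)
    -- value at a
    have hEj1a : Ej1 a = 0 := by
      rw [hEj1]
      simp only
      rw [Finset.sum_eq_single_of_mem 0 (Finset.mem_range.mpr (Nat.succ_pos j))]
      · simp
      · intro i _ hi
        simp [sub_self, zero_pow hi]
    -- derivative
    have hder : ∀ x ∈ Ioo a b, HasDerivAt Ej1 (Ej x) x := by
      intro x hx
      have h1 : HasDerivAt (fun y => iteratedDerivWithin (n-(j+1)) w s y)
          (iteratedDerivWithin (n-(j+1)+1) w s x) x :=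
        myHasDerivAt hab hw (by omega) hx
      rw [show n-(j+1)+1 = n-j from by omega] at h1
      have h2 : HasDerivAt (fun y => ∑ i ∈ Finset.range (j+1),
          iteratedDerivWithin (n-(j+1)+i) w s a / (i.factorial : ℝ) * (y-a)^i)
          (∑ i ∈ Finset.range (j+1),
            iteratedDerivWithin (n-(j+1)+i) w s a / (i.factorial : ℝ)
              * ((i:ℝ) * (x-a)^(i-1) * 1)) x := by
        apply HasDerivAt.fun_sum
        intro i _
        exact (((hasDerivAt_id x).sub_const a).pow i).const_mul _
      have h3 : (∑ i ∈ Finset.range (j+1),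
          iteratedDerivWithin (n-(j+1)+i) w s a / (i.factorial : ℝ)
            * ((i:ℝ) * (x-a)^(i-1) * 1))
          = ∑ i ∈ Finset.range j,
            iteratedDerivWithin (n-j+i) w s a / (i.factorial : ℝ) * (x-a)^i := by
        rw [Finset.sum_range_succ']
        simp only [Nat.cast_zero, zero_mul, mul_zero, add_zero]
        apply Finset.sum_congr rfl
        intro i _
        rw [show n-(j+1)+(i+1) = n-j+i from by omega]
        have hfac : ((i+1).factorial : ℝ) = ((i:ℝ)+1) * (i.factorial : ℝ) := by
          rw [Nat.factorial_succ]; push_cast; ring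
        rw [hfac]
        have hi0 : (i.factorial : ℝ) ≠ 0 := Nat.cast_ne_zero.mpr i.factorial_ne_zero
        have hi1 : ((i:ℝ)+1) ≠ 0 := by positivity
        field_simp
        rw [Nat.add_sub_cancel]; push_cast; ring
      have := h1.sub h2
      rw [h3] at this
      exact this
    -- FTC
    have hFTC : ∀ x ∈ s, Ej1 x = ∫ t in a..x, Ej t :=
      myFTC hab' hEj1cont hEjcont hEj1a hder
    calc Real.sqrt (∫ x in a..b, Ej1 x ^ 2)
        ≤ (b-a) * Real.sqrt (∫ x in a..b, Ej x ^ 2) := myPoincare hab hEjcont hFTC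
      _ ≤ (b-a) * ((b-a)^j * Real.sqrt (∫ x in a..b,
            (iteratedDerivWithin n w s x)^2)) := by
          apply mul_le_mul_of_nonneg_left (ih hj) (by linarith)
      _ = (b-a)^(j+1) * Real.sqrt (∫ x in a..b,
            (iteratedDerivWithin n w s x)^2) := by ring

lemma polyContDiff (P : Polynomial ℝ) (n : ℕ∞) : ContDiff ℝ n (fun x => P.eval x) := by
  induction P using Polynomial.induction_on' with
  | add p q hp hq => simpa [eval_add] using hp.add hq
  | monomial k c => simp only [eval_monomial]; exact contDiff_const.mul (contDiff_id.pow k)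

/-- L² interpolation error estimates for the local interpolant:
‖(P − w)^{(κ)}‖_{L²(a,b)} ≤ C h^{p+1−κ} ‖w^{(p+1)}‖_{L²(a,b)} for κ = 0,1,2. -/
theorem local_interpolant_error (p : ℕ) (hp : 3 ≤ p) :
    ∃ C > 0, ∀ a b : ℝ, a < b →
      ∀ w : ℝ → ℝ, ContDiffOn ℝ (p+1 : ℕ) w (Icc a b) →
      ∀ P : Polynomial ℝ, P.natDegree ≤ p →
        P.eval a = w a →
        (Polynomial.derivative P).eval a = derivWithin w (Icc a b) a →
        (∀ q : Polynomial ℝ, q.natDegree ≤ p - 2 →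
          (∫ x in a..b,
            ((Polynomial.derivative (Polynomial.derivative P)).eval x
              - iteratedDerivWithin 2 w (Icc a b) x) * q.eval x) = 0) →
        ∀ κ : ℕ, κ ≤ 2 →
          Real.sqrt (∫ x in a..b,
              (iteratedDerivWithin κ (fun x => P.eval x - w x) (Icc a b) x)^2)
            ≤ C * (b - a)^(p + 1 - κ) *
              Real.sqrt (∫ x in a..b, (iteratedDerivWithin (p+1) w (Icc a b) x)^2) := by
  refine ⟨1, one_pos, ?_⟩
  intro a b hab w hw P hdeg hPa hPa' horto κ hκ
  have hab' := hab.le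
  set s := Icc a b with hsdef
  have hs : UniqueDiffOn ℝ s := uniqueDiffOn_Icc hab
  have has : a ∈ s := left_mem_Icc.mpr hab'
  set g2 : ℝ → ℝ := iteratedDerivWithin 2 w s with hg2
  set M := Real.sqrt (∫ x in a..b, (iteratedDerivWithin (p+1) w s x)^2) with hMdef
  have hM0 : 0 ≤ M := Real.sqrt_nonneg _
  -- the error function
  have hPc : ContDiff ℝ (p+1 : ℕ) (fun x => P.eval x) := polyContDiff P _
  have he : ContDiffOn ℝ (p+1 : ℕ) (fun x => P.eval x - w x) s := hPc.contDiffOn.sub hw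
  -- iterated derivatives of the error
  have hesub : ∀ (m : ℕ), m ≤ p+1 → ∀ x ∈ s,
      iteratedDerivWithin m (fun x => P.eval x - w x) s x
        = (derivative^[m] P).eval x - iteratedDerivWithin m w s x := by
    intro m hm x hx
    have h1 : iteratedDerivWithin m ((fun x => P.eval x) - w) s x
        = iteratedDerivWithin m (fun x => P.eval x) s x - iteratedDerivWithin m w s x :=
      iteratedDerivWithin_sub hx hs ((hPc.of_le (by exact_mod_cast hm)).contDiffOn.contDiffWithinAt hx)
        ((hw.of_le (by exact_mod_cast hm)) x hx)
    have h2 : iteratedDerivWithin m (fun x => P.eval x - w x) s x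
        = iteratedDerivWithin m ((fun x => P.eval x) - w) s x := rfl
    rw [h2, h1, polyIDW m P hs hx]
  -- Taylor remainder bound at order p-1
  set cc : ℕ → ℝ := fun i => iteratedDerivWithin (2+i) w s a / (i.factorial : ℝ) with hcc
  set E : ℝ → ℝ := fun x => g2 x
      - ∑ i ∈ Finset.range (p-1), cc i * (x-a)^i with hE
  have htb : Real.sqrt (∫ x in a..b, E x ^ 2) ≤ (b-a)^(p-1) * M := by
    have h := myTaylorBound hab hw (p-1) (by omega)
    simp only [show p+1-(p-1) = 2 from by omega] at h
    exact h
  have hEcont : ContinuousOn E s := by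
    apply (myContOn hab hw (by omega)).sub
    apply continuousOn_finset_sum
    intro i _
    exact (continuousOn_const.mul (((continuousOn_id).sub continuousOn_const).pow i))
  -- the polynomial Q
  set Q : Polynomial ℝ := ∑ i ∈ Finset.range (p-1), C (cc i) * (X - C a)^i with hQ
  have hQeval : ∀ x : ℝ, Q.eval x = ∑ i ∈ Finset.range (p-1), cc i * (x-a)^i := by
    intro x
    rw [hQ, eval_finset_sum]
    apply Finset.sum_congr rfl
    intro i _
    simp
  have hQdeg : Q.natDegree ≤ p - 2 := by
    apply natDegree_sum_le_of_forall_le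
    intro i hi
    have hi' := Finset.mem_range.mp hi
    have h1 : ((X - C a : Polynomial ℝ)^i).natDegree ≤ i := by
      rw [natDegree_pow, natDegree_X_sub_C]; omega
    exact (natDegree_C_mul_le _ _).trans (h1.trans (by omega))
  have hg2cont : ContinuousOn g2 s := myContOn hab hw (by omega)
  -- orthogonality argument
  have hfcont : ContinuousOn (fun x => (derivative (derivative P)).eval x - g2 x) s :=
    ((derivative (derivative P)).continuousOn).sub hg2cont
  set N := Real.sqrt (∫ x in a..b, ((derivative (derivative P)).eval x - g2 x) ^ 2) with hN
  have hN0 : 0 ≤ N := Real.sqrt_nonneg _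
  have hi2 : (0:ℝ) ≤ ∫ x in a..b, ((derivative (derivative P)).eval x - g2 x) ^ 2 :=
    intervalIntegral.integral_nonneg hab' (fun x _ => sq_nonneg _)
  have hNsq : N ^ 2 = ∫ x in a..b, ((derivative (derivative P)).eval x - g2 x) ^ 2 :=
    Real.sq_sqrt hi2
  set q0 : Polynomial ℝ := derivative (derivative P) - Q with hq0
  have hq0deg : q0.natDegree ≤ p - 2 := by
    have h1 := natDegree_derivative_le P
    have h2 := natDegree_derivative_le (derivative P)
    exact (natDegree_sub_le _ _).trans (max_le (by omega) hQdeg)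
  have hortho := horto q0 hq0deg
  have hQg2cont : ContinuousOn (fun x => Q.eval x - g2 x) s := Q.continuousOn.sub hg2cont
  have hsplit : (∫ x in a..b, ((derivative (derivative P)).eval x - g2 x) ^ 2)
      = (∫ x in a..b, ((derivative (derivative P)).eval x - g2 x) * q0.eval x)
        + ∫ x in a..b, ((derivative (derivative P)).eval x - g2 x) * (Q.eval x - g2 x) := by
    rw [← intervalIntegral.integral_add
      (myInt hab' (hfcont.fun_mul q0.continuousOn))
      (myInt hab' (hfcont.fun_mul hQg2cont))]
    apply intervalIntegral.integral_congr
    intro x _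
    simp only [hq0, eval_sub]
    ring
  have hEQ : ∀ x : ℝ, Q.eval x - g2 x = -(E x) := by
    intro x
    rw [hQeval x, hE]
    ring
  have hCS : (∫ x in a..b, ((derivative (derivative P)).eval x - g2 x) * (Q.eval x - g2 x))
      ≤ N * ((b-a)^(p-1) * M) := by
    calc (∫ x in a..b, ((derivative (derivative P)).eval x - g2 x) * (Q.eval x - g2 x))
        ≤ N * Real.sqrt (∫ x in a..b, (Q.eval x - g2 x) ^ 2) :=
          myCS hab' hfcont hQg2cont
      _ = N * Real.sqrt (∫ x in a..b, E x ^ 2) := by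
          congr 1
          congr 1
          apply intervalIntegral.integral_congr
          intro x _
          show (Q.eval x - g2 x) ^ 2 = E x ^ 2
          rw [hEQ x]
          ring
      _ ≤ N * ((b-a)^(p-1) * M) := mul_le_mul_of_nonneg_left htb hN0
  have hNY : N ≤ (b-a)^(p-1) * M := by
    have hY0 : 0 ≤ (b-a)^(p-1) * M := mul_nonneg (pow_nonneg (by linarith) _) hM0
    rcases eq_or_lt_of_le hN0 with h0 | hpos
    · rw [← h0]; exact hY0
    · have hNN : N * N ≤ N * ((b-a)^(p-1) * M) := by
        nlinarith [hNsq, hsplit, hortho, hCS]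
      exact le_of_mul_le_mul_left hNN hpos
  -- bounds for the error function derivatives
  have hder2 : ∀ x ∈ s,
      iteratedDerivWithin 2 (fun x => P.eval x - w x) s x
        = (derivative (derivative P)).eval x - g2 x := by
    intro x hx
    rw [hesub 2 (by omega) x hx]
    rfl
  have hB2 : Real.sqrt (∫ x in a..b,
      (iteratedDerivWithin 2 (fun x => P.eval x - w x) s x) ^ 2) ≤ (b-a)^(p-1) * M := by
    have hc : (∫ x in a..b, (iteratedDerivWithin 2 (fun x => P.eval x - w x) s x) ^ 2)
        = ∫ x in a..b, ((derivative (derivative P)).eval x - g2 x) ^ 2 := by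
      apply intervalIntegral.integral_congr
      intro x hx
      show (iteratedDerivWithin 2 (fun x => P.eval x - w x) s x) ^ 2
          = ((derivative (derivative P)).eval x - g2 x) ^ 2
      rw [hder2 x (by rwa [uIcc_of_le hab'] at hx)]
    rw [hc]
    exact hNY
  have hcont2 : ContinuousOn (iteratedDerivWithin 2 (fun x => P.eval x - w x) s) s :=
    myContOn hab he (by omega)
  have hcont1 : ContinuousOn (iteratedDerivWithin 1 (fun x => P.eval x - w x) s) s :=
    myContOn hab he (by omega)
  have hcont0 : ContinuousOn (iteratedDerivWithin 0 (fun x => P.eval x - w x) s) s :=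
    myContOn hab he (by omega)
  have hB1 : Real.sqrt (∫ x in a..b,
      (iteratedDerivWithin 1 (fun x => P.eval x - w x) s x) ^ 2)
      ≤ (b-a)^p * M := by
    have hFa : iteratedDerivWithin 1 (fun x => P.eval x - w x) s a = 0 := by
      rw [hesub 1 (by omega) a has]
      have h1 : (derivative^[1] P) = derivative P := rfl
      rw [h1, iteratedDerivWithin_one, ← hPa']
      ring
    have hFTC := myFTC hab' hcont1 hcont2 hFa
      (fun x hx => myHasDerivAt hab he (by omega) hx)
    calc Real.sqrt (∫ x in a..b,
          (iteratedDerivWithin 1 (fun x => P.eval x - w x) s x) ^ 2)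
        ≤ (b-a) * Real.sqrt (∫ x in a..b,
            (iteratedDerivWithin 2 (fun x => P.eval x - w x) s x) ^ 2) :=
          myPoincare hab hcont2 hFTC
      _ ≤ (b-a) * ((b-a)^(p-1) * M) := mul_le_mul_of_nonneg_left hB2 (by linarith)
      _ = (b-a)^p * M := by
          have hpp : (b-a)^p = (b-a)^(p-1)*(b-a) := by
            rw [← pow_succ]
            congr 1
            omega
          rw [hpp]
          ring
  have hB0 : Real.sqrt (∫ x in a..b,
      (iteratedDerivWithin 0 (fun x => P.eval x - w x) s x) ^ 2)
      ≤ (b-a)^(p+1) * M := by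
    have hFa : iteratedDerivWithin 0 (fun x => P.eval x - w x) s a = 0 := by
      rw [iteratedDerivWithin_zero, hPa]
      ring
    have hFTC := myFTC hab' hcont0 hcont1 hFa
      (fun x hx => myHasDerivAt hab he (by omega) hx)
    calc Real.sqrt (∫ x in a..b,
          (iteratedDerivWithin 0 (fun x => P.eval x - w x) s x) ^ 2)
        ≤ (b-a) * Real.sqrt (∫ x in a..b,
            (iteratedDerivWithin 1 (fun x => P.eval x - w x) s x) ^ 2) :=
          myPoincare hab hcont1 hFTC
      _ ≤ (b-a) * ((b-a)^p * M) := mul_le_mul_of_nonneg_left hB1 (by linarith)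
      _ = (b-a)^(p+1) * M := by ring
  interval_cases κ
  · rw [show p + 1 - 0 = p + 1 from by omega, one_mul]
    exact hB0
  · rw [show p + 1 - 1 = p from by omega, one_mul]
    exact hB1
  · rw [show p + 1 - 2 = p - 1 from by omega, one_mul]
    exact hB2
end
end
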